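/- Let H be a real Hilbert space and T a bounded linear operator on H with ||T|| = 1 whose norm attainment set equals S_{H₀} for a finite-dimensional subspace H₀, and ||T restricted to H₀^⊥|| < 1. Then for any bounded operator A on H, T is Birkhoff–James orthogonal to A if and only if there exists a unit vector x ∈ H₀ with ⟨Tx, Ax⟩ = 0. -/

import Mathlib

open scoped RealInnerProductSpace

section Aux

variable {H : Type*} [NormedAddCommGroup H] [InnerProductSpace ℝ H]

/-- If `‖T‖ = 1` and `T` attains its norm at the unit vector `u`, then
`⟪T u, T v⟫ = ⟪u, v⟫` for every `v`. -/
lemma stmt17_aux_inner_eq (T : H →L[ℝ] H) (hT : ‖T‖ = 1) (u : H) (hu : ‖u‖ = 1)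
    (hTu : ‖T u‖ = 1) (v : H) : ⟪T u, T v⟫ = ⟪u, v⟫ := by
  set a : ℝ := ‖v‖^2 - ‖T v‖^2 with ha
  set b : ℝ := ⟪u, v⟫ - ⟪T u, T v⟫ with hb
  have key : ∀ s : ℝ, 0 ≤ a * s^2 + 2*b*s := by
    intro s
    have h1 : ‖T (u + s • v)‖ ≤ ‖u + s • v‖ := by
      calc ‖T (u + s • v)‖ ≤ ‖T‖ * ‖u + s • v‖ := T.le_opNorm _
      _ = ‖u + s • v‖ := by rw [hT]; ring
    have h2 : ‖T (u + s • v)‖^2 ≤ ‖u + s • v‖^2 :=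
      pow_le_pow_left₀ (norm_nonneg _) h1 2
    have e1 : ‖u + s • v‖^2 = ‖u‖^2 + 2 * (s * ⟪u, v⟫) + s^2 * ‖v‖^2 := by
      rw [norm_add_sq_real, real_inner_smul_right, norm_smul]
      simp only [Real.norm_eq_abs, mul_pow, sq_abs]
    have e2 : ‖T (u + s • v)‖^2 = ‖T u‖^2 + 2 * (s * ⟪T u, T v⟫) + s^2 * ‖T v‖^2 := by
      rw [map_add, map_smul, norm_add_sq_real, real_inner_smul_right, norm_smul]
      simp only [Real.norm_eq_abs, mul_pow, sq_abs]
    rw [e1, e2, hu, hTu] at h2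
    simp only [ha, hb]
    nlinarith [h2]
  have hb0 : b = 0 := by
    set c : ℝ := |a| + 1 with hc
    have hcpos : (0:ℝ) < c := by positivity
    have hac : a ≤ c := by
      have := le_abs_self a; simp only [hc]; linarith
    have k1 := key (-b / c)
    have h3 : a * (-b/c)^2 ≤ c * (-b/c)^2 := mul_le_mul_of_nonneg_right hac (sq_nonneg _)
    have h4 : c * (-b/c)^2 = b^2/c := by
      field_simp
    have h5 : 2*b*(-b/c) = -(2*(b^2/c)) := by ring
    have h6 : b^2/c ≤ 0 := by nlinarith [k1, h3, h4, h5]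
    have h7 : 0 ≤ b^2/c := div_nonneg (sq_nonneg b) hcpos.le
    have hz : b^2/c = 0 := le_antisymm h6 h7
    field_simp at hz
    simpa using hz
  simp only [hb] at hb0
  linarith

/-- If `x ↦ ⟪T x, A x⟫` never vanishes on the unit sphere of `H₀` and is positive at
one point of it, then it is positive everywhere on it. -/
lemma stmt17_aux_sign (T A : H →L[ℝ] H) (H₀ : Submodule ℝ H)
    (hno : ∀ x ∈ H₀, ‖x‖ = 1 → ⟪T x, A x⟫ ≠ 0)
    (u₀ : H) (hu₀ : u₀ ∈ H₀) (hu₀1 : ‖u₀‖ = 1) (hpos : 0 < ⟪T u₀, A u₀⟫) :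
    ∀ x ∈ H₀, ‖x‖ = 1 → 0 < ⟪T x, A x⟫ := by
  intro x hx hx1
  rcases eq_or_ne x (-u₀) with hxe | hxe
  · rw [hxe, map_neg, map_neg, inner_neg_neg]
    exact hpos
  by_contra hle
  push_neg at hle
  have hneg : ⟪T x, A x⟫ < 0 := lt_of_le_of_ne hle (hno x hx hx1)
  set φ : ℝ → ℝ := fun s => ⟪T ((1-s) • u₀ + s • x), A ((1-s) • u₀ + s • x)⟫ with hφ
  have hγ : Continuous (fun s : ℝ => (1-s) • u₀ + s • x) := by continuity
  have hφc : Continuous φ :=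
    Continuous.inner (T.continuous.comp hγ) (A.continuous.comp hγ)
  have hφ0 : φ 0 = ⟪T u₀, A u₀⟫ := by simp [hφ]
  have hφ1 : φ 1 = ⟪T x, A x⟫ := by simp [hφ]
  obtain ⟨s, hs01, hφs⟩ : ∃ s ∈ Set.Icc (0:ℝ) 1, φ s = 0 := by
    have h0mem : (0:ℝ) ∈ Set.Icc (φ 1) (φ 0) := by
      rw [hφ0, hφ1]; exact ⟨hneg.le, hpos.le⟩
    obtain ⟨s, hs, hfs⟩ := intermediate_value_Icc' (by norm_num : (0:ℝ) ≤ 1)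
      hφc.continuousOn h0mem
    exact ⟨s, hs, hfs⟩
  set w : H := (1-s) • u₀ + s • x with hwdef
  have hw : w ∈ H₀ := H₀.add_mem (H₀.smul_mem _ hu₀) (H₀.smul_mem _ hx)
  have hw0 : w ≠ 0 := by
    intro h0
    have hsm : (1-s) • u₀ = -(s • x) := by
      rw [eq_neg_iff_add_eq_zero]; exact h0
    have hnorm : |1-s| = |s| := by
      have := congrArg norm hsm
      rw [norm_neg, norm_smul, norm_smul, hu₀1, hx1, Real.norm_eq_abs, Real.norm_eq_abs] at this
      simpa using this
    have hs12 : s = 1/2 := by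
      rw [abs_of_nonneg (by linarith [hs01.2] : (0:ℝ) ≤ 1 - s), abs_of_nonneg hs01.1] at hnorm
      linarith
    rw [hwdef, hs12] at h0
    have hux : u₀ + x = 0 := by
      have h2 := congrArg (fun z => (2:ℝ) • z) h0
      simp only [smul_add, smul_smul] at h2
      norm_num at h2
      simpa using h2
    exact hxe (eq_neg_of_add_eq_zero_right hux)
  set z : H := ‖w‖⁻¹ • w with hzdef
  have hz : z ∈ H₀ := H₀.smul_mem _ hw
  have hz1 : ‖z‖ = 1 := norm_smul_inv_norm hw0
  have hzinner : ⟪T z, A z⟫ = 0 := by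
    have : ⟪T w, A w⟫ = 0 := hφs
    rw [hzdef, map_smul, map_smul, real_inner_smul_left, real_inner_smul_right, this]
    ring
  exact hno z hz hz1 hzinner

end Aux

section Aux2

variable {H : Type*} [NormedAddCommGroup H] [InnerProductSpace ℝ H] [CompleteSpace H]

set_option maxHeartbeats 1000000 in
/-- If `⟪T x, A x⟫ > 0` on the unit sphere of `H₀` (and the structural hypotheses hold),
then `‖T + lam • A‖ < 1` for some `lam`. -/
lemma stmt17_aux_exists_lt (T A : H →L[ℝ] H)
    (H₀ : Submodule ℝ H) [FiniteDimensional ℝ H₀]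
    (hinner : ∀ u ∈ H₀, ∀ v, ⟪T u, T v⟫ = ⟪u, v⟫) (c : ℝ)
    (hTvle : ∀ v ∈ H₀ᗮ, ‖T v‖ ≤ c * ‖v‖) (hc0 : 0 ≤ c) (hc1 : c < 1)
    (hpos : ∀ x ∈ H₀, ‖x‖ = 1 → 0 < ⟪T x, A x⟫)
    (u₀ : H) (hu₀ : u₀ ∈ H₀) (hu₀1 : ‖u₀‖ = 1) :
    ∃ lam : ℝ, ‖T + lam • A‖ < 1 := by
  classical
  obtain ⟨a, ha, hAle⟩ : ∃ a : ℝ, 0 < a ∧ ∀ y : H, ‖A y‖ ≤ a * ‖y‖ := by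
    refine ⟨‖A‖ + 1, by positivity, fun y => ?_⟩
    calc ‖A y‖ ≤ ‖A‖ * ‖y‖ := A.le_opNorm y
    _ ≤ (‖A‖ + 1) * ‖y‖ := by nlinarith [norm_nonneg y]
  -- obtain δ via compactness of the sphere of H₀
  obtain ⟨δ, hδ, hF⟩ : ∃ δ : ℝ, 0 < δ ∧ ∀ u ∈ H₀, δ * ‖u‖^2 ≤ ⟪T u, A u⟫ := by
    set f : H₀ → ℝ := fun y => ⟪T y, A y⟫ with hfdef
    have hfc : Continuous f :=
      Continuous.inner (T.continuous.comp continuous_subtype_val)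
        (A.continuous.comp continuous_subtype_val)
    have hSne : (Metric.sphere (0 : H₀) 1).Nonempty := by
      refine ⟨⟨u₀, hu₀⟩, ?_⟩
      simp only [mem_sphere_iff_norm, sub_zero]
      exact hu₀1
    obtain ⟨y₀, hy₀S, hmin⟩ :=
      (isCompact_sphere (0 : H₀) 1).exists_isMinOn hSne hfc.continuousOn
    have hy₀1 : ‖(y₀ : H)‖ = 1 := by simpa [mem_sphere_iff_norm] using hy₀S
    refine ⟨f y₀, hpos (y₀ : H) y₀.2 hy₀1, ?_⟩
    intro u hu
    rcases eq_or_ne u 0 with rfl | hu0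
    · simp
    have hnu : (0:ℝ) < ‖u‖ := norm_pos_iff.mpr hu0
    have hyS : (⟨‖u‖⁻¹ • u, H₀.smul_mem _ hu⟩ : H₀) ∈ Metric.sphere (0 : H₀) 1 := by
      simp only [mem_sphere_iff_norm, sub_zero]
      show ‖(‖u‖⁻¹ • u : H)‖ = 1
      exact norm_smul_inv_norm hu0
    have hminy : f y₀ ≤ f ⟨‖u‖⁻¹ • u, H₀.smul_mem _ hu⟩ := hmin hyS
    have hfy : f ⟨‖u‖⁻¹ • u, H₀.smul_mem _ hu⟩ = ‖u‖⁻¹ * (‖u‖⁻¹ * ⟪T u, A u⟫) := by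
      simp only [hfdef]
      rw [map_smul, map_smul, real_inner_smul_left, real_inner_smul_right]
    rw [hfy] at hminy
    have hinv : ‖u‖⁻¹ * ‖u‖ = 1 := inv_mul_cancel₀ hnu.ne'
    have key : (‖u‖⁻¹ * (‖u‖⁻¹ * ⟪T u, A u⟫)) * ‖u‖^2 = ⟪T u, A u⟫ := by
      linear_combination (⟪T u, A u⟫ * (‖u‖⁻¹*‖u‖ + 1)) * hinv
    calc f y₀ * ‖u‖^2 ≤ (‖u‖⁻¹ * (‖u‖⁻¹ * ⟪T u, A u⟫)) * ‖u‖^2 :=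
          mul_le_mul_of_nonneg_right hminy (sq_nonneg _)
    _ = ⟪T u, A u⟫ := key
  -- constants
  obtain ⟨c', hc'0, hc'1, hcc'⟩ : ∃ c' : ℝ, 0 ≤ c' ∧ c' < 1 ∧ c + (1-c)/2 ≤ c' :=
    ⟨(1+c)/2, by linarith, by linarith, by linarith⟩
  have h1c'2 : 0 < 1 - c'^2 := by nlinarith
  obtain ⟨t, ht, ht1, ht2, ht3, ht4⟩ :
      ∃ t : ℝ, 0 < t ∧ t * a^2 ≤ δ ∧ t * a ≤ (1-c)/2 ∧ t * a ≤ 1 ∧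
        36 * t * a^2 ≤ δ * (1-c'^2) := by
    refine ⟨min (δ/a^2) (min ((1-c)/(2*a)) (min (1/a) (δ*(1-c'^2)/(36*a^2)))), ?_, ?_, ?_, ?_, ?_⟩
    · refine lt_min (by positivity) (lt_min (div_pos (by linarith) (by positivity))
        (lt_min (by positivity) (div_pos (mul_pos hδ h1c'2) (by positivity))))
    · have h := min_le_left (δ/a^2) (min ((1-c)/(2*a)) (min (1/a) (δ*(1-c'^2)/(36*a^2))))
      rw [le_div_iff₀ (by positivity : (0:ℝ) < a^2)] at h
      exact h
    · have h := (min_le_right (δ/a^2) _).trans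
        (min_le_left ((1-c)/(2*a)) (min (1/a) (δ*(1-c'^2)/(36*a^2))))
      rw [le_div_iff₀ (by positivity : (0:ℝ) < 2*a)] at h
      nlinarith
    · have h := (min_le_right (δ/a^2) _).trans ((min_le_right ((1-c)/(2*a)) _).trans
        (min_le_left (1/a) (δ*(1-c'^2)/(36*a^2))))
      rw [le_div_iff₀ ha] at h
      linarith
    · have h := (min_le_right (δ/a^2) _).trans ((min_le_right ((1-c)/(2*a)) _).trans
        (min_le_right (1/a) (δ*(1-c'^2)/(36*a^2))))
      rw [le_div_iff₀ (by positivity : (0:ℝ) < 36*a^2)] at h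
      nlinarith
  obtain ⟨σ, hσδ, hσle⟩ : ∃ σ : ℝ, σ * δ = 18*t*a^2 ∧ σ ≤ (1-c'^2)/2 := by
    refine ⟨18*t*a^2/δ, by field_simp, ?_⟩
    rw [div_le_iff₀ hδ]
    nlinarith
  obtain ⟨r, hr0, hr1, r1, r2⟩ :
      ∃ r : ℝ, 0 ≤ r ∧ r < 1 ∧ 1 - t*δ/2 ≤ r ∧ (1+c'^2)/2 ≤ r := by
    refine ⟨max (1 - t*δ/2) ((1+c'^2)/2), ?_, ?_, le_max_left _ _, le_max_right _ _⟩
    · exact le_trans (by nlinarith : (0:ℝ) ≤ (1+c'^2)/2) (le_max_right _ _)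
    · exact max_lt (by nlinarith) (by nlinarith)
  -- key operator bound
  have hbound : ∀ x : H, ‖(T + (-t) • A) x‖ ≤ Real.sqrt r * ‖x‖ := by
    intro x
    obtain ⟨u, hu, v, hv, hxuv⟩ := H₀.exists_add_mem_mem_orthogonal x
    have hBx : (T + (-t) • A) x = (T u - t • A u) + (T v - t • A v) := by
      simp only [ContinuousLinearMap.add_apply, ContinuousLinearMap.smul_apply, hxuv,
        map_add]
      module
    set p : H := T u - t • A u with hpdef
    set q : H := T v - t • A v with hqdef
    have huv : ⟪u, v⟫ = 0 := (Submodule.mem_orthogonal H₀ v).mp hv u hu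
    have hTuv : ⟪T u, T v⟫ = 0 := by rw [hinner u hu v]; exact huv
    have hTunorm2 : ‖T u‖^2 = ‖u‖^2 := by
      have h := hinner u hu u
      rw [real_inner_self_eq_norm_sq, real_inner_self_eq_norm_sq] at h
      exact h
    have hTun : ‖T u‖ = ‖u‖ := by
      have h := congrArg Real.sqrt hTunorm2
      rwa [Real.sqrt_sq (norm_nonneg _), Real.sqrt_sq (norm_nonneg _)] at h
    have hAu : ‖A u‖ ≤ a * ‖u‖ := hAle u
    have hAv : ‖A v‖ ≤ a * ‖v‖ := hAle v
    have hTvle' : ‖T v‖ ≤ c * ‖v‖ := hTvle v hv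
    -- bound on ‖p‖²
    have hp2 : ‖p‖^2 = ‖T u‖^2 - 2*(t*⟪T u, A u⟫) + t^2*‖A u‖^2 := by
      rw [hpdef, norm_sub_sq_real, real_inner_smul_right, norm_smul]
      simp only [Real.norm_eq_abs, mul_pow, sq_abs]
    have hAu2 : ‖A u‖^2 ≤ a^2 * ‖u‖^2 := by
      calc ‖A u‖^2 ≤ (a * ‖u‖)^2 := pow_le_pow_left₀ (norm_nonneg _) hAu 2
      _ = a^2 * ‖u‖^2 := by rw [mul_pow]
    have h4 : ‖p‖^2 ≤ (1 - t*δ) * ‖u‖^2 := by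
      have k1 : t * (δ * ‖u‖^2) ≤ t * ⟪T u, A u⟫ :=
        mul_le_mul_of_nonneg_left (hF u hu) ht.le
      have k2 : t^2 * ‖A u‖^2 ≤ t^2 * (a^2 * ‖u‖^2) :=
        mul_le_mul_of_nonneg_left hAu2 (sq_nonneg t)
      have k3 : (t*a^2) * (t*‖u‖^2) ≤ δ * (t*‖u‖^2) :=
        mul_le_mul_of_nonneg_right ht1 (mul_nonneg ht.le (sq_nonneg _))
      linarith [hp2, hTunorm2, k1, k2, k3]
    -- bound on ‖q‖
    have hq : ‖q‖ ≤ c' * ‖v‖ := by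
      have hq1 : ‖q‖ ≤ ‖T v‖ + t * ‖A v‖ := by
        calc ‖q‖ ≤ ‖T v‖ + ‖t • A v‖ := norm_sub_le _ _
        _ = ‖T v‖ + t * ‖A v‖ := by
            rw [norm_smul, Real.norm_eq_abs, abs_of_pos ht]
      have hq2 : t * ‖A v‖ ≤ t * (a * ‖v‖) := mul_le_mul_of_nonneg_left hAv ht.le
      have hq3 : (t*a) * ‖v‖ ≤ ((1-c)/2) * ‖v‖ :=
        mul_le_mul_of_nonneg_right ht2 (norm_nonneg v)
      have hq4 : (c + (1-c)/2) * ‖v‖ ≤ c' * ‖v‖ :=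
        mul_le_mul_of_nonneg_right hcc' (norm_nonneg v)
      linarith
    have h5 : ‖q‖^2 ≤ c'^2 * ‖v‖^2 := by
      calc ‖q‖^2 ≤ (c' * ‖v‖)^2 := pow_le_pow_left₀ (norm_nonneg q) hq 2
      _ = c'^2 * ‖v‖^2 := by rw [mul_pow]
    -- cross term
    have hcross : ⟪p, q⟫ ≤ 3*(t*a)*(‖u‖*‖v‖) := by
      have hexp : ⟪p, q⟫ = ⟪T u, T v⟫ - t*⟪T u, A v⟫ - t*⟪A u, T v⟫ + t^2*⟪A u, A v⟫ := by
        simp only [hpdef, hqdef, inner_sub_left, inner_sub_right, real_inner_smul_left,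
          real_inner_smul_right]
        ring
      have e1 : -⟪T u, A v⟫ ≤ ‖T u‖ * ‖A v‖ :=
        (neg_le_abs _).trans (abs_real_inner_le_norm _ _)
      have e2 : -⟪A u, T v⟫ ≤ ‖A u‖ * ‖T v‖ :=
        (neg_le_abs _).trans (abs_real_inner_le_norm _ _)
      have e3 : ⟪A u, A v⟫ ≤ ‖A u‖ * ‖A v‖ :=
        (le_abs_self _).trans (abs_real_inner_le_norm _ _)
      have m1 : t * (‖T u‖ * ‖A v‖) ≤ t*a*(‖u‖*‖v‖) := by
        rw [hTun]
        linarith [mul_le_mul_of_nonneg_left (mul_le_mul_of_nonneg_left hAv (norm_nonneg u)) ht.le]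
      have m2 : t * (‖A u‖ * ‖T v‖) ≤ t*a*(‖u‖*‖v‖) := by
        have s1 : ‖A u‖ * ‖T v‖ ≤ (a*‖u‖) * (c*‖v‖) :=
          mul_le_mul hAu hTvle' (norm_nonneg _) (by positivity)
        have s2 : (a*‖u‖) * (c*‖v‖) ≤ (a*‖u‖) * (1*‖v‖) :=
          mul_le_mul_of_nonneg_left
            (mul_le_mul_of_nonneg_right hc1.le (norm_nonneg v)) (by positivity)
        linarith [mul_le_mul_of_nonneg_left (s1.trans s2) ht.le]
      have m3 : t^2 * (‖A u‖ * ‖A v‖) ≤ t*a*(‖u‖*‖v‖) := by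
        have s1 : ‖A u‖ * ‖A v‖ ≤ (a*‖u‖) * (a*‖v‖) :=
          mul_le_mul hAu hAv (norm_nonneg _) (by positivity)
        have s2 : t^2 * (‖A u‖ * ‖A v‖) ≤ t^2 * ((a*‖u‖) * (a*‖v‖)) :=
          mul_le_mul_of_nonneg_left s1 (sq_nonneg t)
        have s3 : (t*a)*(t*a) ≤ 1*(t*a) :=
          mul_le_mul_of_nonneg_right ht3 (by positivity)
        linarith [s2, mul_le_mul_of_nonneg_right s3 (mul_nonneg (norm_nonneg u) (norm_nonneg v))]
      have f1 : -(t*⟪T u, A v⟫) ≤ t * (‖T u‖ * ‖A v‖) := by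
        linarith [mul_le_mul_of_nonneg_left e1 ht.le]
      have f2 : -(t*⟪A u, T v⟫) ≤ t * (‖A u‖ * ‖T v‖) := by
        linarith [mul_le_mul_of_nonneg_left e2 ht.le]
      have f3 : t^2*⟪A u, A v⟫ ≤ t^2 * (‖A u‖ * ‖A v‖) :=
        mul_le_mul_of_nonneg_left e3 (sq_nonneg t)
      rw [hexp, hTuv]
      linarith [f1.trans m1, f2.trans m2, f3.trans m3]
    -- combine the cross term with the weighted AM-GM
    have h6 : 2*⟪p, q⟫ ≤ (t*δ/2)*‖u‖^2 + σ*‖v‖^2 := by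
      have sqh : 0 ≤ t*(δ*‖u‖ - 6*a*‖v‖)^2 := mul_nonneg ht.le (sq_nonneg _)
      have mult : 12*(t*a)*δ*(‖u‖*‖v‖) ≤ t*δ^2*‖u‖^2 + 36*t*a^2*‖v‖^2 := by
        linarith [sqh, sq_nonneg (δ*‖u‖ - 6*a*‖v‖)]
      have step1 : 2*δ*⟪p, q⟫ ≤ 2*δ*(3*(t*a)*(‖u‖*‖v‖)) :=
        mul_le_mul_of_nonneg_left hcross (by positivity)
      have hσq : (σ*δ)*‖v‖^2 = (18*t*a^2)*‖v‖^2 := by rw [hσδ]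
      have final : δ * (2*⟪p, q⟫) ≤ δ * ((t*δ/2)*‖u‖^2 + σ*‖v‖^2) := by
        linarith [step1, mult, hσq]
      exact le_of_mul_le_mul_left final hδ
    have hx2 : ‖x‖^2 = ‖u‖^2 + ‖v‖^2 := by
      rw [hxuv, norm_add_sq_real, huv]
      ring
    have hBx2 : ‖(T + (-t) • A) x‖^2 = ‖p‖^2 + 2*⟪p, q⟫ + ‖q‖^2 := by
      rw [hBx, norm_add_sq_real]
    have hfin : ‖(T + (-t) • A) x‖^2 ≤ r * ‖x‖^2 := by
      have w1 : (1 - t*δ/2) * ‖u‖^2 ≤ r * ‖u‖^2 :=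
        mul_le_mul_of_nonneg_right r1 (sq_nonneg _)
      have w2 : ((1+c'^2)/2) * ‖v‖^2 ≤ r * ‖v‖^2 :=
        mul_le_mul_of_nonneg_right r2 (sq_nonneg _)
      have w3 : σ * ‖v‖^2 ≤ ((1-c'^2)/2) * ‖v‖^2 :=
        mul_le_mul_of_nonneg_right hσle (sq_nonneg _)
      have hrx : r*‖x‖^2 = r*‖u‖^2 + r*‖v‖^2 := by rw [hx2]; ring
      linarith [h4, h5, h6, w1, w2, w3, hBx2, hrx]
    calc ‖(T + (-t) • A) x‖ = Real.sqrt (‖(T + (-t) • A) x‖^2) :=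
          (Real.sqrt_sq (norm_nonneg _)).symm
    _ ≤ Real.sqrt (r * ‖x‖^2) := Real.sqrt_le_sqrt hfin
    _ = Real.sqrt r * ‖x‖ := by
        rw [Real.sqrt_mul hr0, Real.sqrt_sq (norm_nonneg _)]
  refine ⟨-t, ?_⟩
  have hop : ‖T + (-t) • A‖ ≤ Real.sqrt r :=
    ContinuousLinearMap.opNorm_le_bound _ (Real.sqrt_nonneg r) hbound
  have hsr : Real.sqrt r < 1 := by
    rw [show (1:ℝ) = Real.sqrt 1 by simp]
    exact Real.sqrt_lt_sqrt hr0 (by simpa using hr1)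
  linarith

end Aux2

/-- For a norm-one operator `T` on a real Hilbert space whose norm attainment set is
the unit sphere of a finite-dimensional subspace `H₀` with `‖T|_{H₀^⊥}‖ < 1`:
`T ⊥_B A` iff there is a unit vector `x ∈ H₀` with `⟨Tx, Ax⟩ = 0`. -/
theorem stmt17 {H : Type*} [NormedAddCommGroup H] [InnerProductSpace ℝ H] [CompleteSpace H]
    (T : H →L[ℝ] H) (hT : ‖T‖ = 1)
    (H₀ : Submodule ℝ H) [FiniteDimensional ℝ H₀]
    (hMT : {x : H | ‖x‖ = 1 ∧ ‖T x‖ = 1} = {x : H | x ∈ H₀ ∧ ‖x‖ = 1})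
    (hperp : ‖T.comp H₀ᗮ.subtypeL‖ < 1) :
    ∀ A : H →L[ℝ] H,
      (∀ lam : ℝ, ‖T + lam • A‖ ≥ ‖T‖) ↔
        ∃ x : H, x ∈ H₀ ∧ ‖x‖ = 1 ∧ (inner ℝ (T x) (A x) : ℝ) = 0 := by
  intro A
  have hunit : ∀ x : H, x ∈ H₀ → ‖x‖ = 1 → ‖T x‖ = 1 := by
    intro x hx h1
    exact ((Set.ext_iff.mp hMT x).mpr ⟨hx, h1⟩).2
  set c : ℝ := ‖T.comp H₀ᗮ.subtypeL‖ with hcdef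
  have hc0 : 0 ≤ c := by rw [hcdef]; exact norm_nonneg (T.comp H₀ᗮ.subtypeL)
  have hTvle : ∀ v ∈ H₀ᗮ, ‖T v‖ ≤ c * ‖v‖ := by
    intro v hv
    have : T v = (T.comp H₀ᗮ.subtypeL) ⟨v, hv⟩ := rfl
    rw [this]
    exact (T.comp H₀ᗮ.subtypeL).le_opNorm _
  have hinner : ∀ u ∈ H₀, ∀ v : H, ⟪T u, T v⟫ = ⟪u, v⟫ := by
    intro u hu v
    rcases eq_or_ne u 0 with rfl | hu0
    · simp
    have hnu : (0:ℝ) < ‖u‖ := norm_pos_iff.mpr hu0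
    have hw : ‖u‖⁻¹ • u ∈ H₀ := H₀.smul_mem _ hu
    have hw1 : ‖(‖u‖⁻¹ • u : H)‖ = 1 := norm_smul_inv_norm hu0
    have hkey := stmt17_aux_inner_eq T hT (‖u‖⁻¹ • u) hw1 (hunit _ hw hw1) v
    rw [map_smul, real_inner_smul_left, real_inner_smul_left] at hkey
    exact mul_left_cancel₀ (inv_ne_zero hnu.ne') hkey
  have hne : ∃ x : H, x ∈ H₀ ∧ ‖x‖ = 1 := by
    by_contra hno
    push_neg at hno
    have hbot : H₀ = ⊥ := by
      rw [Submodule.eq_bot_iff]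
      intro x hx
      by_contra hx0
      exact hno (‖x‖⁻¹ • x) (H₀.smul_mem _ hx) (norm_smul_inv_norm hx0)
    have htop : H₀ᗮ = ⊤ := by rw [hbot]; exact Submodule.bot_orthogonal_eq_top
    have : ‖T‖ ≤ c := by
      apply ContinuousLinearMap.opNorm_le_bound _ hc0
      intro x
      exact hTvle x (htop ▸ Submodule.mem_top)
    rw [hT] at this
    linarith
  constructor
  · intro hBJ
    by_contra hcon
    push_neg at hcon
    obtain ⟨u₀, hu₀, hu₀1⟩ := hne
    have h0 := hcon u₀ hu₀ hu₀1
    have hnoall : ∀ x ∈ H₀, ‖x‖ = 1 → ⟪T x, A x⟫ ≠ 0 := fun x hx h1 => hcon x hx h1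
    rcases h0.lt_or_gt with hneg | hpos
    · -- use -A
      have hpos' : (0:ℝ) < ⟪T u₀, (-A) u₀⟫ := by
        simp only [ContinuousLinearMap.neg_apply, inner_neg_right]
        linarith
      have hnoall' : ∀ x ∈ H₀, ‖x‖ = 1 → ⟪T x, (-A) x⟫ ≠ 0 := by
        intro x hx h1
        simp only [ContinuousLinearMap.neg_apply, inner_neg_right]
        exact neg_ne_zero.mpr (hnoall x hx h1)
      have hsign := stmt17_aux_sign T (-A) H₀ hnoall' u₀ hu₀ hu₀1 hpos'
      obtain ⟨lam, hlam⟩ := stmt17_aux_exists_lt T (-A) H₀ hinner c hTvle hc0 hperp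
        hsign u₀ hu₀ hu₀1
      have heq : T + lam • (-A) = T + (-lam) • A := by
        rw [smul_neg, neg_smul]
      rw [heq] at hlam
      have := hBJ (-lam)
      rw [hT] at this
      linarith
    · have hsign := stmt17_aux_sign T A H₀ hnoall u₀ hu₀ hu₀1 hpos
      obtain ⟨lam, hlam⟩ := stmt17_aux_exists_lt T A H₀ hinner c hTvle hc0 hperp
        hsign u₀ hu₀ hu₀1
      have := hBJ lam
      rw [hT] at this
      linarith
  · rintro ⟨x, hx, hx1, hinn0⟩ lam
    rw [hT, ge_iff_le]
    have hTx : ‖T x‖ = 1 := hunit x hx hx1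
    have expand : ‖(T + lam • A) x‖^2 = 1 + lam^2 * ‖A x‖^2 := by
      simp only [ContinuousLinearMap.add_apply, ContinuousLinearMap.smul_apply]
      rw [norm_add_sq_real, real_inner_smul_right, hinn0, norm_smul, hTx]
      simp only [Real.norm_eq_abs, mul_pow, sq_abs]
      ring
    have h1 : 1 ≤ ‖(T + lam • A) x‖ := by
      nlinarith [norm_nonneg ((T + lam • A) x), expand, sq_nonneg (lam * ‖A x‖)]
    calc (1:ℝ) ≤ ‖(T + lam • A) x‖ := h1
    _ ≤ ‖T + lam • A‖ * ‖x‖ := (T + lam • A).le_opNorm x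
    _ = ‖T + lam • A‖ := by rw [hx1, mul_one]
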